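/- Let H be a hypothesis class whose optimal subset opt_D(H) is monotone, let 0 < c < c' < 1, and let h_c ∈ argmin_{h∈H} R_c(h) and h_{c'} ∈ argmin_{h∈H} R_{c'}(h) be optimal rules in H for loss parameters c and c'. If P(h_c(X) ≠ h_{c'}(X)) > 0, then h_{c'}(x) ≤ h_c(x) for every x ∈ X, P(h_c(X) = 1 ∧ h_{c'}(X) = 0) > 0, and c ≤ P(Y = 1 | h_c(X) = 1 ∧ h_{c'}(X) = 0) ≤ c'. -/

import Mathlib

open MeasureTheory ProbabilityTheory Set

noncomputable section

/-- The loss with false-positive cost `c` and false-negative cost `1 - c`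
(`true` encodes the decision/label `1`, `false` encodes `0`). -/
def idtLoss (c : ℝ) (yhat y : Bool) : ℝ :=
  if yhat = y then 0 else if yhat = true then c else 1 - c

/-- The risk of decision rule `h` on distribution `D` with loss parameter `c`. -/
def risk {X : Type*} [MeasurableSpace X] (D : Measure (X × Bool)) (c : ℝ) (h : X → Bool) : ℝ :=
  ∫ p, idtLoss c (h p.1) p.2 ∂D

/-- `q` is a version of the posterior probability `x ↦ P(Y = 1 ∣ X = x)` for `D`. -/
def IsPosterior {X : Type*} [MeasurableSpace X] (D : Measure (X × Bool)) (q : X → ℝ) : Prop :=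
  Measurable q ∧ ∀ A : Set X, MeasurableSet A →
    ∫ x in A, q x ∂(D.map Prod.fst) = (D (A ×ˢ ({true} : Set Bool))).toReal

/-- A hypothesis class is monotone if any two of its members are pointwise comparable. -/
def ClassMonotone {X : Type*} (H : Set (X → Bool)) : Prop :=
  ∀ h ∈ H, ∀ h' ∈ H, (∀ x, h' x ≤ h x) ∨ (∀ x, h x ≤ h' x)

/-- The optimal subset of a hypothesis class: rules that are risk-minimizers in `H`
for some loss parameter `c ∈ (0,1)`. -/
def optSubset {X : Type*} [MeasurableSpace X] (D : Measure (X × Bool))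
    (H : Set (X → Bool)) : Set (X → Bool) :=
  {h | h ∈ H ∧ ∃ c ∈ Set.Ioo (0 : ℝ) 1, ∀ h' ∈ H, risk D c h ≤ risk D c h'}

/-- The induced posterior probability associated with a family `hfam` of optimal rules
(`hfam c` optimal in the class for loss parameter `c`). -/
def inducedPosterior {X : Type*} (hfam : ℝ → (X → Bool)) (x : X) : ℝ :=
  sSup ({c | c ∈ Set.Icc (0 : ℝ) 1 ∧ hfam c x = true} ∪ {0})

lemma idtLoss_eq (c : ℝ) (b y : Bool) :
    idtLoss c b y = (if b = true ∧ y = false then c else 0)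
      + (if b = false ∧ y = true then 1 - c else 0) := by
  cases b <;> cases y <;> simp [idtLoss]

lemma idtLoss_sub_eq (c : ℝ) {b b' : Bool} (y : Bool) (hle : b' ≤ b) :
    idtLoss c b y - idtLoss c b' y = (if b = true ∧ b' = false then c else 0)
      - (if y = true ∧ b = true ∧ b' = false then 1 else 0) := by
  cases b <;> cases b' <;> cases y <;>
    first
      | exact absurd hle (by decide)
      | (simp [idtLoss]; try ring)

lemma idtLoss_repr (c : ℝ) {X : Type*} (h : X → Bool) (p : X × Bool) :
    idtLoss c (h p.1) p.2 =
      Set.indicator {q : X × Bool | h q.1 = true ∧ q.2 = false} (fun _ => c) p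
        + Set.indicator {q : X × Bool | h q.1 = false ∧ q.2 = true} (fun _ => 1 - c) p := by
  rw [Set.indicator_apply, Set.indicator_apply]
  simp only [Set.mem_setOf_eq]
  rw [idtLoss_eq]

lemma integrable_idtLoss {X : Type*} [MeasurableSpace X] (D : Measure (X × Bool))
    [IsFiniteMeasure D] (c : ℝ) {h : X → Bool} (mh : Measurable h) :
    Integrable (fun p : X × Bool => idtLoss c (h p.1) p.2) D := by
  have ms1 : MeasurableSet {q : X × Bool | h q.1 = true ∧ q.2 = false} :=
    ((mh.comp measurable_fst) (measurableSet_singleton true)).inter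
      (measurable_snd (measurableSet_singleton false))
  have ms2 : MeasurableSet {q : X × Bool | h q.1 = false ∧ q.2 = true} :=
    ((mh.comp measurable_fst) (measurableSet_singleton false)).inter
      (measurable_snd (measurableSet_singleton true))
  have hrw : (fun p : X × Bool => idtLoss c (h p.1) p.2) =
      fun p => Set.indicator {q : X × Bool | h q.1 = true ∧ q.2 = false} (fun _ => c) p
        + Set.indicator {q : X × Bool | h q.1 = false ∧ q.2 = true} (fun _ => 1 - c) p :=
    funext (idtLoss_repr c h)
  rw [hrw]
  exact ((integrable_const c).indicator ms1).add ((integrable_const (1 - c)).indicator ms2)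

lemma risk_sub {X : Type*} [MeasurableSpace X] (D : Measure (X × Bool))
    [IsFiniteMeasure D] (c : ℝ) {h h' : X → Bool} (mh : Measurable h) (mh' : Measurable h')
    (hle : ∀ x, h' x ≤ h x) :
    risk D c h - risk D c h' =
      c * (D {p : X × Bool | h p.1 = true ∧ h' p.1 = false}).toReal
        - (D {p : X × Bool | p.2 = true ∧ h p.1 = true ∧ h' p.1 = false}).toReal := by
  have msA : MeasurableSet {p : X × Bool | h p.1 = true ∧ h' p.1 = false} :=
    ((mh.comp measurable_fst) (measurableSet_singleton true)).inter
      ((mh'.comp measurable_fst) (measurableSet_singleton false))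
  have msT : MeasurableSet {p : X × Bool | p.2 = true ∧ h p.1 = true ∧ h' p.1 = false} :=
    (measurable_snd (measurableSet_singleton true)).inter msA
  have key : ∀ p : X × Bool, idtLoss c (h p.1) p.2 - idtLoss c (h' p.1) p.2 =
      Set.indicator {p : X × Bool | h p.1 = true ∧ h' p.1 = false} (fun _ => c) p
        - Set.indicator {p : X × Bool | p.2 = true ∧ h p.1 = true ∧ h' p.1 = false}
            (fun _ => (1 : ℝ)) p := by
    intro p
    rw [Set.indicator_apply, Set.indicator_apply]
    simp only [Set.mem_setOf_eq]
    rw [idtLoss_sub_eq c p.2 (hle p.1)]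
  have i1 := integrable_idtLoss D c mh
  have i2 := integrable_idtLoss D c mh'
  have iA : Integrable
      (Set.indicator {p : X × Bool | h p.1 = true ∧ h' p.1 = false} (fun _ => c)) D :=
    (integrable_const c).indicator msA
  have iT : Integrable
      (Set.indicator {p : X × Bool | p.2 = true ∧ h p.1 = true ∧ h' p.1 = false}
        (fun _ => (1 : ℝ))) D :=
    (integrable_const (1 : ℝ)).indicator msT
  calc risk D c h - risk D c h'
      = ∫ p, (idtLoss c (h p.1) p.2 - idtLoss c (h' p.1) p.2) ∂D := (integral_sub i1 i2).symm
    _ = ∫ p, (Set.indicator {p : X × Bool | h p.1 = true ∧ h' p.1 = false} (fun _ => c) p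
          - Set.indicator {p : X × Bool | p.2 = true ∧ h p.1 = true ∧ h' p.1 = false}
              (fun _ => (1 : ℝ)) p) ∂D := by
        exact integral_congr_ae (Filter.Eventually.of_forall key)
    _ = (∫ p, Set.indicator {p : X × Bool | h p.1 = true ∧ h' p.1 = false} (fun _ => c) p ∂D)
          - ∫ p, Set.indicator {p : X × Bool | p.2 = true ∧ h p.1 = true ∧ h' p.1 = false}
              (fun _ => (1 : ℝ)) p ∂D := integral_sub iA iT
    _ = c * (D {p : X × Bool | h p.1 = true ∧ h' p.1 = false}).toReal
          - (D {p : X × Bool | p.2 = true ∧ h p.1 = true ∧ h' p.1 = false}).toReal := by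
        rw [integral_indicator_const _ msA, integral_indicator_const _ msT]
        simp [mul_comm]; rfl

/-- posterior probability between two optimal decision boundaries. -/
theorem stmt_4 {X : Type*} [MeasurableSpace X]
    (D : Measure (X × Bool)) [IsProbabilityMeasure D]
    (H : Set (X → Bool)) (hmeas : ∀ h ∈ H, Measurable h)
    (hmono : ClassMonotone (optSubset D H))
    (c c' : ℝ) (hc : 0 < c) (hcc' : c < c') (hc' : c' < 1)
    (hc_ : X → Bool) (hc'_ : X → Bool)
    (hcmem : hc_ ∈ H) (hcopt : ∀ h' ∈ H, risk D c hc_ ≤ risk D c h')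
    (hc'mem : hc'_ ∈ H) (hc'opt : ∀ h' ∈ H, risk D c' hc'_ ≤ risk D c' h')
    (hdis : 0 < D.map Prod.fst {x | hc_ x ≠ hc'_ x}) :
    (∀ x, hc'_ x ≤ hc_ x) ∧
    0 < D.map Prod.fst {x | hc_ x = true ∧ hc'_ x = false} ∧
    c ≤ (D {p | p.2 = true ∧ hc_ p.1 = true ∧ hc'_ p.1 = false}).toReal /
          (D {p | hc_ p.1 = true ∧ hc'_ p.1 = false}).toReal ∧
    (D {p | p.2 = true ∧ hc_ p.1 = true ∧ hc'_ p.1 = false}).toReal /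
          (D {p | hc_ p.1 = true ∧ hc'_ p.1 = false}).toReal ≤ c' := by
  have mhc : Measurable hc_ := hmeas _ hcmem
  have mhc' : Measurable hc'_ := hmeas _ hc'mem
  have mem1 : hc_ ∈ optSubset D H := ⟨hcmem, c, ⟨hc, hcc'.trans hc'⟩, hcopt⟩
  have mem2 : hc'_ ∈ optSubset D H := ⟨hc'mem, c', ⟨hc.trans hcc', hc'⟩, hc'opt⟩
  have mapeq : ∀ (f g : X → Bool), Measurable f → Measurable g →
      D.map Prod.fst {x | f x = true ∧ g x = false} = D {p | f p.1 = true ∧ g p.1 = false} := by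
    intro f g mf mg
    have msX : MeasurableSet {x | f x = true ∧ g x = false} :=
      (mf (measurableSet_singleton true)).inter (mg (measurableSet_singleton false))
    rw [Measure.map_apply measurable_fst msX]
    rfl
  rcases hmono hc_ mem1 hc'_ mem2 with hle | hle
  · -- the good case : hc'_ ≤ hc_ pointwise
    have hset : {x | hc_ x ≠ hc'_ x} = {x | hc_ x = true ∧ hc'_ x = false} := by
      ext x
      have := hle x
      simp only [Set.mem_setOf_eq]
      cases h1 : hc_ x <;> cases h2 : hc'_ x <;> rw [h1, h2] at this <;>
        first
          | exact absurd this (by decide)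
          | simp [h1, h2]
    rw [hset] at hdis
    have hDpos : 0 < D {p : X × Bool | hc_ p.1 = true ∧ hc'_ p.1 = false} := by
      rw [← mapeq _ _ mhc mhc']; exact hdis
    have hm : 0 < (D {p : X × Bool | hc_ p.1 = true ∧ hc'_ p.1 = false}).toReal :=
      ENNReal.toReal_pos hDpos.ne' (measure_ne_top D _)
    have e1 := risk_sub D c mhc mhc' hle
    have e2 := risk_sub D c' mhc mhc' hle
    have d1 : risk D c hc_ - risk D c hc'_ ≤ 0 := sub_nonpos.2 (hcopt _ hc'mem)
    have d2 : 0 ≤ risk D c' hc_ - risk D c' hc'_ := sub_nonneg.2 (hc'opt _ hcmem)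
    refine ⟨hle, hdis, ?_, ?_⟩
    · rw [le_div_iff₀ hm]; linarith [e1 ▸ d1]
    · rw [div_le_iff₀ hm]; linarith [e2 ▸ d2]
  · -- the impossible case : hc_ ≤ hc'_ pointwise
    exfalso
    have hset : {x | hc_ x ≠ hc'_ x} = {x | hc'_ x = true ∧ hc_ x = false} := by
      ext x
      have := hle x
      simp only [Set.mem_setOf_eq]
      cases h1 : hc_ x <;> cases h2 : hc'_ x <;> rw [h1, h2] at this <;>
        first
          | exact absurd this (by decide)
          | simp [h1, h2]
    rw [hset] at hdis
    have hDpos : 0 < D {p : X × Bool | hc'_ p.1 = true ∧ hc_ p.1 = false} := by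
      rw [← mapeq _ _ mhc' mhc]; exact hdis
    have hm : 0 < (D {p : X × Bool | hc'_ p.1 = true ∧ hc_ p.1 = false}).toReal :=
      ENNReal.toReal_pos hDpos.ne' (measure_ne_top D _)
    have e1 := risk_sub D c mhc' mhc hle
    have e2 := risk_sub D c' mhc' mhc hle
    have d1 : 0 ≤ risk D c hc'_ - risk D c hc_ := sub_nonneg.2 (hcopt _ hc'mem)
    have d2 : risk D c' hc'_ - risk D c' hc_ ≤ 0 := sub_nonpos.2 (hc'opt _ hcmem)
    nlinarith [e1 ▸ d1, e2 ▸ d2]
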